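/- arXiv:2309.13892 — 2 statements merged into one kernel-verified Lean document; each statement's English description precedes it below -/
import Mathlib

section
/- Let T be the graph on vertex set {1,2,...,n} \ {3} (n ≥ 6) with edges {2,4}, {2,6}, and {1, i+4} for 1 ≤ i ≤ n-4. Then T is a tree, and {1,2} is a maximal independent set of T of minimum cardinality among all maximal independent sets of T. -/
/-- `A` is an independent set of vertices of `G`. -/
def IsIndepSet {V : Type} (G : SimpleGraph V) (A : Set V) : Prop :=
  ∀ a ∈ A, ∀ b ∈ A, ¬ G.Adj a b

/-- `A` is a maximal independent set of vertices of `G`. -/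
def IsMaxIndepSet {V : Type} (G : SimpleGraph V) (A : Set V) : Prop :=
  IsIndepSet G A ∧ ∀ B : Set V, IsIndepSet G B → A ⊆ B → B = A

/-- `C` is a vertex cover of `G`. -/
def IsVertexCover {V : Type} (G : SimpleGraph V) (C : Set V) : Prop :=
  ∀ a b : V, G.Adj a b → a ∈ C ∨ b ∈ C

/-- `C` is a minimal vertex cover of `G`. -/
def IsMinVertexCover {V : Type} (G : SimpleGraph V) (C : Set V) : Prop :=
  IsVertexCover G C ∧ ∀ D : Set V, D ⊆ C → IsVertexCover G D → D = C

/-- The graph `T` on vertex set `{1,…,n} \ {3}` with edges `{2,4}`, `{2,6}`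
and `{1, i+4}` for `1 ≤ i ≤ n-4`. -/
def Tgraph (n : ℕ) : SimpleGraph {i : ℕ // (1 ≤ i ∧ i ≤ n) ∧ i ≠ 3} :=
  SimpleGraph.fromRel (fun a b =>
    (a.val = 2 ∧ b.val = 4) ∨ (a.val = 2 ∧ b.val = 6) ∨
    (a.val = 1 ∧ ∃ i : ℕ, 1 ≤ i ∧ i ≤ n - 4 ∧ b.val = i + 4))

open SimpleGraph

lemma no_cycle_deg_one {V : Type} [DecidableEq V] {G : SimpleGraph V} {u v u' : V}
    {c : G.Walk u u} (hc : c.IsCycle) (hv : v ∈ c.support)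
    (hu' : ∀ w, G.Adj v w → w = u') : False := by
  have hc' := hc.rotate hv
  generalize c.rotate v hv = c' at hc'
  cases c' with
  | nil => exact Walk.IsCycle.not_of_nil hc'
  | @cons _ w _ h p =>
    have hw : w = u' := hu' w h
    have hpd : p.darts ≠ [] := by
      intro h0
      have hlen : p.length = 0 := by
        have := congrArg List.length h0
        simpa [Walk.length_darts] using this
      have : w = v := by
        cases p with
        | nil => rfl
        | cons _ _ => simp at hlen
      exact G.irrefl (this ▸ h)
    set d := p.darts.getLast hpd with hd
    have hdsnd : d.toProd.2 = v := by
      rw [hd, Walk.getLast_darts_eq_lastDart]; simp [Walk.lastDart_toProd]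
    have hdadj : G.Adj d.toProd.1 d.toProd.2 := d.adj
    have hdfst : d.toProd.1 = u' := by
      apply hu'
      rw [hdsnd] at hdadj
      exact hdadj.symm
    have hdmem : d ∈ p.darts := List.getLast_mem hpd
    have hedge : d.edge ∈ p.edges := List.mem_map_of_mem hdmem
    have hne : s(v, w) ∉ p.edges := by
      have := hc'.edges_nodup
      simpa [Walk.edges_cons] using (List.nodup_cons.mp (by simpa using this)).1
    apply hne
    have : d.edge = s(v, w) := by
      have : d.edge = s(d.toProd.1, d.toProd.2) := rfl
      rw [this, hdfst, hdsnd, hw, Sym2.eq_swap]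
    rwa [this] at hedge

lemma Tgraph_adj {n : ℕ} (hn : 6 ≤ n) (a b : {i : ℕ // (1 ≤ i ∧ i ≤ n) ∧ i ≠ 3}) :
    (Tgraph n).Adj a b ↔
      ((a.val = 2 ∧ b.val = 4) ∨ (a.val = 2 ∧ b.val = 6) ∨ (a.val = 1 ∧ 5 ≤ b.val)) ∨
      ((b.val = 2 ∧ a.val = 4) ∨ (b.val = 2 ∧ a.val = 6) ∨ (b.val = 1 ∧ 5 ≤ a.val)) := by
  obtain ⟨a, ⟨ha1, ha2⟩, ha3⟩ := a
  obtain ⟨b, ⟨hb1, hb2⟩, hb3⟩ := b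
  rw [Tgraph, SimpleGraph.fromRel_adj]
  simp only [ne_eq, Subtype.mk.injEq]
  constructor
  · rintro ⟨hne, h⟩
    rcases h with (h | h | ⟨h1, i, hi1, hi2, hi3⟩) | (h | h | ⟨h1, i, hi1, hi2, hi3⟩) <;> omega
  · intro h
    refine ⟨by omega, ?_⟩
    rcases h with (h | h | ⟨h1, h2⟩) | (h | h | ⟨h1, h2⟩)
    · exact Or.inl (Or.inl h)
    · exact Or.inl (Or.inr (Or.inl h))
    · exact Or.inl (Or.inr (Or.inr ⟨h1, b - 4, by omega⟩))
    · exact Or.inr (Or.inl h)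
    · exact Or.inr (Or.inr (Or.inl h))
    · exact Or.inr (Or.inr (Or.inr ⟨h1, a - 4, by omega⟩))


/-- `T` is a tree and `{1, 2}` is a maximal independent set of `T` of minimum
cardinality among all maximal independent sets of `T`. -/
theorem Tgraph_isTree_and_min_maxIndep (n : ℕ) (hn : 6 ≤ n) :
    (Tgraph n).IsTree ∧
    IsMaxIndepSet (Tgraph n) {a | a.val = 1 ∨ a.val = 2} ∧
    ∀ B : Set {i : ℕ // (1 ≤ i ∧ i ≤ n) ∧ i ≠ 3}, IsMaxIndepSet (Tgraph n) B →
      ({a : {i : ℕ // (1 ≤ i ∧ i ≤ n) ∧ i ≠ 3} | a.val = 1 ∨ a.val = 2}).ncard ≤ B.ncard := by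
  classical
  let x1 : {i : ℕ // (1 ≤ i ∧ i ≤ n) ∧ i ≠ 3} := ⟨1, by omega⟩
  let x2 : {i : ℕ // (1 ≤ i ∧ i ≤ n) ∧ i ≠ 3} := ⟨2, by omega⟩
  let x5 : {i : ℕ // (1 ≤ i ∧ i ≤ n) ∧ i ≠ 3} := ⟨5, by omega⟩
  let x6 : {i : ℕ // (1 ≤ i ∧ i ≤ n) ∧ i ≠ 3} := ⟨6, by omega⟩
  have hx1 : x1.val = 1 := rfl
  have hx2 : x2.val = 2 := rfl
  have hx5 : x5.val = 5 := rfl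
  have hx6 : x6.val = 6 := rfl
  -- connectivity
  have hreach : ∀ v, (Tgraph n).Reachable v x1 := by
    intro v
    have hv := v.2
    have h16 : (Tgraph n).Adj x1 x6 := by rw [Tgraph_adj hn]; omega
    have h26 : (Tgraph n).Adj x2 x6 := by rw [Tgraph_adj hn]; omega
    rcases (by omega : v.val = 1 ∨ v.val = 2 ∨ v.val = 4 ∨ 5 ≤ v.val) with h | h | h | h
    · exact (Subtype.ext (h.trans hx1.symm) : v = x1) ▸ Reachable.refl _
    · have : v = x2 := Subtype.ext (h.trans hx2.symm)
      subst this
      exact (h26.reachable).trans (h16.symm.reachable)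
    · have h24 : (Tgraph n).Adj v x2 := by rw [Tgraph_adj hn]; omega
      exact (h24.reachable).trans ((h26.reachable).trans (h16.symm.reachable))
    · have h1v : (Tgraph n).Adj x1 v := by rw [Tgraph_adj hn]; omega
      exact h1v.symm.reachable
  have hconn : (Tgraph n).Connected := by
    have : Nonempty {i : ℕ // (1 ≤ i ∧ i ≤ n) ∧ i ≠ 3} := ⟨x1⟩
    exact ⟨fun u v => (hreach u).trans (hreach v).symm⟩
  -- acyclicity
  have hacyc : (Tgraph n).IsAcyclic := by
    intro v c hc
    have hsupp : ∀ w ∈ c.support, w.val = 1 ∨ w.val = 2 ∨ w.val = 6 := by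
      intro w hw
      by_contra hcon
      push_neg at hcon
      have hw2 := w.2
      rcases (by omega : w.val = 4 ∨ (5 ≤ w.val ∧ w.val ≠ 6)) with h4 | ⟨h5, h6⟩
      · refine no_cycle_deg_one hc hw (u' := x2) ?_
        intro z hz
        rw [Tgraph_adj hn] at hz
        exact Subtype.ext (by omega)
      · refine no_cycle_deg_one hc hw (u' := x1) ?_
        intro z hz
        have hz2 := z.2
        rw [Tgraph_adj hn] at hz
        exact Subtype.ext (by omega)
    have hedge : ∀ e ∈ c.edges, e = s(x1, x6) ∨ e = s(x2, x6) := by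
      intro e he
      induction e using Sym2.ind with
      | _ a b =>
        have hadj : (Tgraph n).Adj a b := c.edges_subset_edgeSet he
        have ha := hsupp a (c.fst_mem_support_of_mem_edges he)
        have hb := hsupp b (c.snd_mem_support_of_mem_edges he)
        rw [Tgraph_adj hn] at hadj
        rcases (by omega : (a.val = 1 ∧ b.val = 6) ∨ (a.val = 6 ∧ b.val = 1) ∨
            (a.val = 2 ∧ b.val = 6) ∨ (a.val = 6 ∧ b.val = 2)) with
          ⟨h1, h2⟩ | ⟨h1, h2⟩ | ⟨h1, h2⟩ | ⟨h1, h2⟩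
        · left; rw [(Subtype.ext h1 : a = x1), (Subtype.ext h2 : b = x6)]
        · left; rw [(Subtype.ext h1 : a = x6), (Subtype.ext h2 : b = x1), Sym2.eq_swap]
        · right; rw [(Subtype.ext h1 : a = x2), (Subtype.ext h2 : b = x6)]
        · right; rw [(Subtype.ext h1 : a = x6), (Subtype.ext h2 : b = x2), Sym2.eq_swap]
    have h3 := hc.three_le_length
    have hnd := hc.edges_nodup
    have hlen : c.edges.length ≤ 2 := by
      calc c.edges.length = c.edges.toFinset.card := (List.toFinset_card_of_nodup hnd).symm
        _ ≤ ({s(x1, x6), s(x2, x6)} : Finset _).card := by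
            apply Finset.card_le_card
            intro e he
            rw [List.mem_toFinset] at he
            rcases hedge e he with h | h <;> simp [h]
        _ ≤ 2 := Finset.card_insert_le _ _ |>.trans (by simp)
    rw [Walk.length_edges] at hlen
    omega
  -- independent set A
  have hAeq : {a : {i : ℕ // (1 ≤ i ∧ i ≤ n) ∧ i ≠ 3} | a.val = 1 ∨ a.val = 2} = {x1, x2} := by
    ext a
    simp only [Set.mem_setOf_eq, Set.mem_insert_iff, Set.mem_singleton_iff]
    constructor
    · rintro (h | h)
      · exact Or.inl (Subtype.ext h)
      · exact Or.inr (Subtype.ext h)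
    · rintro (rfl | rfl)
      · exact Or.inl rfl
      · exact Or.inr rfl
  have hAindep : _root_.IsIndepSet (Tgraph n) {a | a.val = 1 ∨ a.val = 2} := by
    intro a ha b hb hadj
    rw [Tgraph_adj hn] at hadj
    simp only [Set.mem_setOf_eq] at ha hb
    omega
  have hAmax : IsMaxIndepSet (Tgraph n) {a | a.val = 1 ∨ a.val = 2} := by
    refine ⟨hAindep, ?_⟩
    intro B hB hAB
    apply Set.Subset.antisymm _ hAB
    intro v hv
    simp only [Set.mem_setOf_eq]
    by_contra hcon
    push_neg at hcon
    have hv2 := v.2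
    rcases (by omega : v.val = 4 ∨ 5 ≤ v.val) with h | h
    · have h2B : x2 ∈ B := hAB (Or.inr hx2)
      exact hB x2 h2B v hv (by rw [Tgraph_adj hn]; omega)
    · have h1B : x1 ∈ B := hAB (Or.inl hx1)
      exact hB x1 h1B v hv (by rw [Tgraph_adj hn]; omega)
  refine ⟨⟨hconn, hacyc⟩, hAmax, ?_⟩
  -- minimality
  intro B hBmax
  have hAcard : ({a : {i : ℕ // (1 ≤ i ∧ i ≤ n) ∧ i ≠ 3} | a.val = 1 ∨ a.val = 2}).ncard = 2 := by
    rw [hAeq]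
    exact Set.ncard_pair (by intro h; have := congrArg Subtype.val h; simp [hx1, hx2] at this)
  rw [hAcard]
  by_contra hcon
  push_neg at hcon
  have hB1 : B.ncard ≤ 1 := by omega
  have hfin : B.Finite := by
    have : Finite {i : ℕ // (1 ≤ i ∧ i ≤ n) ∧ i ≠ 3} := by
      apply Finite.of_injective (fun v : {i : ℕ // (1 ≤ i ∧ i ≤ n) ∧ i ≠ 3} =>
        (⟨v.val, by have := v.2; omega⟩ : Fin (n + 1)))
      intro a b h
      exact Subtype.ext (congrArg Fin.val h)
    exact Set.toFinite B
  rw [Set.ncard_le_one_iff_eq hfin] at hB1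
  rcases hB1 with rfl | ⟨v, rfl⟩
  · have := hBmax.2 {x1} (by
      intro a ha b hb hadj
      simp only [Set.mem_singleton_iff] at ha hb
      subst ha; subst hb
      exact (Tgraph n).irrefl hadj) (Set.empty_subset _)
    exact absurd (this ▸ rfl : x1 ∈ (∅ : Set _)) (by simp)
  · -- B = {v}: find w ≠ v not adjacent to v
    have hv2 := v.2
    obtain ⟨w, hwv, hnadj⟩ : ∃ w, w ≠ v ∧ ¬ (Tgraph n).Adj v w := by
      rcases (by omega : v.val = 1 ∨ v.val = 2 ∨ v.val = 4 ∨ v.val = 6 ∨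
          (5 ≤ v.val ∧ v.val ≠ 6)) with h | h | h | h | ⟨h, h'⟩
      · exact ⟨x2, by intro he; have := congrArg Subtype.val he; omega,
          by rw [Tgraph_adj hn]; omega⟩
      · exact ⟨x1, by intro he; have := congrArg Subtype.val he; omega,
          by rw [Tgraph_adj hn]; omega⟩
      · exact ⟨x1, by intro he; have := congrArg Subtype.val he; omega,
          by rw [Tgraph_adj hn]; omega⟩
      · exact ⟨x5, by intro he; have := congrArg Subtype.val he; omega,
          by rw [Tgraph_adj hn]; omega⟩
      · exact ⟨x2, by intro he; have := congrArg Subtype.val he; omega,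
          by rw [Tgraph_adj hn]; omega⟩
    have hindep : _root_.IsIndepSet (Tgraph n) {v, w} := by
      intro a ha b hb hadj
      simp only [Set.mem_insert_iff, Set.mem_singleton_iff] at ha hb
      rcases ha with rfl | rfl <;> rcases hb with rfl | rfl
      · exact (Tgraph n).irrefl hadj
      · exact hnadj hadj
      · exact hnadj hadj.symm
      · exact (Tgraph n).irrefl hadj
    have := hBmax.2 {v, w} hindep (by intro a ha; exact Or.inl ha)
    have hwB : w ∈ ({v} : Set _) := this ▸ (Or.inr rfl)
    exact hwv (Set.mem_singleton_iff.mp hwB)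
end

section
/- Let n ≥ 6, S = K[x_1,...,x_n], and let I be the ideal generated by u_i = x_1 x_3 x_{i+4} for 1 ≤ i ≤ n-4, u_{n-3} = x_1 x_4 x_5, u_{n-2} = x_2 x_3 x_4, u_{n-1} = x_2 x_3 x_6. Then the second squarefree power I^[2] is the principal ideal generated by u_{n-3} u_{n-1} = x_1 x_2 x_3 x_4 x_5 x_6. -/
open MvPolynomial

/-- Depth of an `S`-module `M` over `S = K[x_1,…,x_n]` with respect to the
irrelevant maximal ideal `(x_1,…,x_n)`: the supremum of the lengths of
regular sequences on `M` consisting of elements of that ideal. -/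
noncomputable def pdepth (n : ℕ) (K : Type) [Field K]
    (M : Type) [AddCommGroup M] [Module (MvPolynomial (Fin n) K) M] : ℕ :=
  sSup {k : ℕ | ∃ rs : List (MvPolynomial (Fin n) K), rs.length = k ∧
    (∀ r ∈ rs, r ∈ Ideal.span (Set.range (X : Fin n → MvPolynomial (Fin n) K))) ∧
    RingTheory.Sequence.IsRegular M rs}
/-- `f` is a squarefree monomial (a product of distinct variables). -/
def IsSqfreeMonomial {n : ℕ} {K : Type} [Field K]
    (f : MvPolynomial (Fin n) K) : Prop :=
  ∃ s : Finset (Fin n), f = ∏ i ∈ s, X i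

/-- `f` is a (monic) monomial. -/
def IsMonomialElem {n : ℕ} {K : Type} [Field K]
    (f : MvPolynomial (Fin n) K) : Prop :=
  ∃ s : (Fin n →₀ ℕ), f = monomial s (1 : K)
/-- The `k`-th squarefree power `I^[k]` of `I`: the ideal generated by the
squarefree monomials belonging to `I^k`. -/
noncomputable def sqPow {n : ℕ} {K : Type} [Field K]
    (I : Ideal (MvPolynomial (Fin n) K)) (k : ℕ) :
    Ideal (MvPolynomial (Fin n) K) :=
  Ideal.span {f | IsSqfreeMonomial f ∧ f ∈ I ^ k}

/-- `d_k`: the minimal degree of a monomial belonging to `I^[k]`. -/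
noncomputable def dmin {n : ℕ} {K : Type} [Field K]
    (I : Ideal (MvPolynomial (Fin n) K)) (k : ℕ) : ℕ :=
  sInf {d : ℕ | ∃ f, IsMonomialElem f ∧ f ∈ sqPow I k ∧ f.totalDegree = d}

/-- The normalized depth function `g_I(k) = depth(S/I^[k]) - (d_k - 1)`. -/
noncomputable def gI (n : ℕ) (K : Type) [Field K]
    (I : Ideal (MvPolynomial (Fin n) K)) (k : ℕ) : ℤ :=
  (pdepth n K (MvPolynomial (Fin n) K ⧸ sqPow I k) : ℤ) - ((dmin I k : ℤ) - 1)
/-- The generating set `{u_1,…,u_{n-1}}` of the ideal `I`: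
`u_i = x_1 x_3 x_{i+4}` for `1 ≤ i ≤ n-4`, `u_{n-3} = x_1 x_4 x_5`,
`u_{n-2} = x_2 x_3 x_4`, `u_{n-1} = x_2 x_3 x_6` (the variable `x_j`
corresponds to `X ⟨j-1, _⟩`). -/
def IGens (n : ℕ) (hn : 6 ≤ n) (K : Type) [Field K] :
    Set (MvPolynomial (Fin n) K) :=
  {f | (∃ i : ℕ, ∃ _ : 1 ≤ i, ∃ _ : i ≤ n - 4,
          f = X ⟨0, by omega⟩ * X ⟨2, by omega⟩ * X ⟨i + 3, by omega⟩)
    ∨ f = X ⟨0, by omega⟩ * X ⟨3, by omega⟩ * X ⟨4, by omega⟩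
    ∨ f = X ⟨1, by omega⟩ * X ⟨2, by omega⟩ * X ⟨3, by omega⟩
    ∨ f = X ⟨1, by omega⟩ * X ⟨2, by omega⟩ * X ⟨5, by omega⟩}


section AuxSq

variable {n : ℕ} {K : Type} [Field K]

lemma prodX_eq_monomial (s : Finset (Fin n)) :
    (∏ i ∈ s, X i : MvPolynomial (Fin n) K) =
      monomial (∑ i ∈ s, Finsupp.single i 1) 1 := by
  classical
  induction s using Finset.induction with
  | empty => simp [monomial_zero']
  | insert a s hx ih => rw [Finset.prod_insert hx, Finset.sum_insert hx, ih]; simp [X, monomial_mul]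

lemma tripleX_eq_monomial (i j k : Fin n) :
    (X i * X j * X k : MvPolynomial (Fin n) K) =
      monomial (Finsupp.single i 1 + Finsupp.single j 1 + Finsupp.single k 1) 1 := by
  simp [X, monomial_mul]

end AuxSq

/-- Exponent vectors of the generators. -/
def AExp (n : ℕ) (hn : 6 ≤ n) : Set (Fin n →₀ ℕ) :=
  {d | (∃ i : ℕ, ∃ _ : 1 ≤ i, ∃ _ : i ≤ n - 4,
          d = Finsupp.single ⟨0, by omega⟩ 1 + Finsupp.single ⟨2, by omega⟩ 1 +
              Finsupp.single ⟨i + 3, by omega⟩ 1)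
    ∨ d = Finsupp.single ⟨0, by omega⟩ 1 + Finsupp.single ⟨3, by omega⟩ 1 +
          Finsupp.single ⟨4, by omega⟩ 1
    ∨ d = Finsupp.single ⟨1, by omega⟩ 1 + Finsupp.single ⟨2, by omega⟩ 1 +
          Finsupp.single ⟨3, by omega⟩ 1
    ∨ d = Finsupp.single ⟨1, by omega⟩ 1 + Finsupp.single ⟨2, by omega⟩ 1 +
          Finsupp.single ⟨5, by omega⟩ 1}

set_option maxHeartbeats 1600000 in
lemma key_comb (n : ℕ) (hn : 6 ≤ n) (a b t : Fin n →₀ ℕ)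
    (ha : a ∈ AExp n hn) (hb : b ∈ AExp n hn) (hab : a + b ≤ t)
    (ht : ∀ c, t c ≤ 1) :
    a + b = Finsupp.single ⟨0, by omega⟩ 1 + Finsupp.single ⟨1, by omega⟩ 1 +
      Finsupp.single ⟨2, by omega⟩ 1 + Finsupp.single ⟨3, by omega⟩ 1 +
      Finsupp.single ⟨4, by omega⟩ 1 + Finsupp.single ⟨5, by omega⟩ 1 := by
  rcases ha with ⟨i, hi1, hi2, rfl⟩ | rfl | rfl | rfl <;>
    rcases hb with ⟨j, hj1, hj2, rfl⟩ | rfl | rfl | rfl <;>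
    first
    | (exfalso
       first
       | (have hc := Finsupp.le_def.mp hab ⟨0, by omega⟩
          have hc' := ht ⟨0, by omega⟩
          simp only [Finsupp.add_apply, Finsupp.single_apply, Fin.mk.injEq] at hc
          split_ifs at hc <;> omega)
       | (have hc := Finsupp.le_def.mp hab ⟨1, by omega⟩
          have hc' := ht ⟨1, by omega⟩
          simp only [Finsupp.add_apply, Finsupp.single_apply, Fin.mk.injEq] at hc
          split_ifs at hc <;> omega)
       | (have hc := Finsupp.le_def.mp hab ⟨2, by omega⟩
          have hc' := ht ⟨2, by omega⟩
          simp only [Finsupp.add_apply, Finsupp.single_apply, Fin.mk.injEq] at hc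
          split_ifs at hc <;> omega)
       | (have hc := Finsupp.le_def.mp hab ⟨3, by omega⟩
          have hc' := ht ⟨3, by omega⟩
          simp only [Finsupp.add_apply, Finsupp.single_apply, Fin.mk.injEq] at hc
          split_ifs at hc <;> omega))
    | abel1

lemma IGens_eq_image (n : ℕ) (hn : 6 ≤ n) (K : Type) [Field K] :
    IGens n hn K = (fun d => monomial d (1 : K)) '' AExp n hn := by
  ext f
  constructor
  · rintro (⟨i, hi1, hi2, rfl⟩ | rfl | rfl | rfl)
    · exact ⟨_, Or.inl ⟨i, hi1, hi2, rfl⟩, (tripleX_eq_monomial _ _ _).symm⟩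
    · exact ⟨_, Or.inr (Or.inl rfl), (tripleX_eq_monomial _ _ _).symm⟩
    · exact ⟨_, Or.inr (Or.inr (Or.inl rfl)), (tripleX_eq_monomial _ _ _).symm⟩
    · exact ⟨_, Or.inr (Or.inr (Or.inr rfl)), (tripleX_eq_monomial _ _ _).symm⟩
  · rintro ⟨d, (⟨i, hi1, hi2, rfl⟩ | rfl | rfl | rfl), rfl⟩
    · exact Or.inl ⟨i, hi1, hi2, (tripleX_eq_monomial _ _ _).symm⟩
    · exact Or.inr (Or.inl (tripleX_eq_monomial _ _ _).symm)
    · exact Or.inr (Or.inr (Or.inl (tripleX_eq_monomial _ _ _).symm))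
    · exact Or.inr (Or.inr (Or.inr (tripleX_eq_monomial _ _ _).symm))

lemma sq_span_image (n : ℕ) (hn : 6 ≤ n) (K : Type) [Field K] :
    Ideal.span (IGens n hn K) ^ 2 =
      Ideal.span ((fun d => monomial d (1 : K)) ''
        {d | ∃ a ∈ AExp n hn, ∃ b ∈ AExp n hn, d = a + b}) := by
  rw [IGens_eq_image, sq, Ideal.span_mul_span']
  congr 1
  ext f
  constructor
  · rintro ⟨g, ⟨a, ha, rfl⟩, h, ⟨b, hb, rfl⟩, rfl⟩
    exact ⟨a + b, ⟨a, ha, b, hb, rfl⟩, by simp [monomial_mul]⟩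
  · rintro ⟨d, ⟨a, ha, b, hb, rfl⟩, rfl⟩
    exact ⟨monomial a 1, ⟨a, ha, rfl⟩, monomial b 1, ⟨b, hb, rfl⟩, by simp [monomial_mul]⟩

/-- `I^[2]` is the principal ideal generated by
`u_{n-3} u_{n-1} = x_1 x_2 x_3 x_4 x_5 x_6`. -/
theorem sqPow_two_principal (n : ℕ) (hn : 6 ≤ n) (K : Type) [Field K] :
    sqPow (Ideal.span (IGens n hn K)) 2 =
      Ideal.span {X ⟨0, by omega⟩ * X ⟨1, by omega⟩ * X ⟨2, by omega⟩ *
        X ⟨3, by omega⟩ * X ⟨4, by omega⟩ * (X ⟨5, by omega⟩ :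
          MvPolynomial (Fin n) K)} := by
  classical
  set m : MvPolynomial (Fin n) K := X ⟨0, by omega⟩ * X ⟨1, by omega⟩ * X ⟨2, by omega⟩ *
    X ⟨3, by omega⟩ * X ⟨4, by omega⟩ * X ⟨5, by omega⟩ with hm
  have hmE : m = monomial (Finsupp.single ⟨0, by omega⟩ 1 + Finsupp.single ⟨1, by omega⟩ 1 +
      Finsupp.single ⟨2, by omega⟩ 1 + Finsupp.single ⟨3, by omega⟩ 1 +
      Finsupp.single ⟨4, by omega⟩ 1 + Finsupp.single ⟨5, by omega⟩ 1) (1 : K) := by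
    simp [hm, X, monomial_mul]
  apply le_antisymm
  · rw [sqPow]
    apply Ideal.span_le.mpr
    rintro f ⟨⟨s, rfl⟩, hf2⟩
    rw [sq_span_image n hn K] at hf2
    rw [prodX_eq_monomial] at hf2 ⊢
    set t : Fin n →₀ ℕ := ∑ i ∈ s, Finsupp.single i 1 with htdef
    have ht : ∀ c, t c ≤ 1 := by
      intro c
      rw [htdef, Finsupp.finset_sum_apply]
      simp only [Finsupp.single_apply]
      rw [Finset.sum_ite_eq' s c (fun _ => 1)]
      split <;> omega
    rw [mem_ideal_span_monomial_image] at hf2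
    have hsupp : t ∈ (monomial t (1 : K)).support := by
      rw [support_monomial, if_neg one_ne_zero]; exact Finset.mem_singleton_self t
    obtain ⟨d, ⟨a, ha, b, hb, rfl⟩, hle⟩ := hf2 _ hsupp
    have hkey := key_comb n hn a b t ha hb hle ht
    rw [SetLike.mem_coe, Ideal.mem_span_singleton]
    refine ⟨monomial (t - (a + b)) 1, ?_⟩
    rw [hmE, monomial_mul, one_mul, ← hkey, add_tsub_cancel_of_le hle]
  · apply Ideal.span_le.mpr
    rintro f rfl
    apply Ideal.subset_span
    constructor
    · refine ⟨{⟨0, by omega⟩, ⟨1, by omega⟩, ⟨2, by omega⟩, ⟨3, by omega⟩,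
        ⟨4, by omega⟩, ⟨5, by omega⟩}, ?_⟩
      rw [prodX_eq_monomial, hmE]
      congr 1
      rw [Finset.sum_insert (by simp [Fin.ext_iff]), Finset.sum_insert (by simp [Fin.ext_iff]),
        Finset.sum_insert (by simp [Fin.ext_iff]), Finset.sum_insert (by simp [Fin.ext_iff]),
        Finset.sum_insert (by simp [Fin.ext_iff]), Finset.sum_singleton]
      congr 1
      abel1
    · have hu : (X ⟨0, by omega⟩ * X ⟨3, by omega⟩ * X ⟨4, by omega⟩ : MvPolynomial (Fin n) K)
          ∈ Ideal.span (IGens n hn K) :=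
        Ideal.subset_span (Or.inr (Or.inl rfl))
      have hv : (X ⟨1, by omega⟩ * X ⟨2, by omega⟩ * X ⟨5, by omega⟩ : MvPolynomial (Fin n) K)
          ∈ Ideal.span (IGens n hn K) :=
        Ideal.subset_span (Or.inr (Or.inr (Or.inr rfl)))
      have : m = (X ⟨0, by omega⟩ * X ⟨3, by omega⟩ * X ⟨4, by omega⟩) *
          (X ⟨1, by omega⟩ * X ⟨2, by omega⟩ * X ⟨5, by omega⟩) := by rw [hm]; ring
      rw [sq, this]
      exact Ideal.mul_mem_mul hu hv
end
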